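/- Let d ≥ 1, let p ≥ 2 be an integer and let r ∈ {1, …, p-1}. Let φ : ℝ^d → [0, ∞) be measurable with φ ∈ L^p(ℝ^d). Then lim_{R→∞} R^{-d} ∫_{B_R} ∫_{B_R} ∫_{B_R} φ(z₁)^r φ(z₂)^r φ(z₃)^{p-r} φ(z₂ - z₁ - z₃)^{p-r} dz₁ dz₂ dz₃ = 0. -/

import Mathlib

open MeasureTheory Filter Metric
open scoped Topology ENNReal

namespace Stmt9Aux

variable {α : Type*} [MeasurableSpace α]

lemma holder_aux (ν : Measure α) {p e : ℕ} (he : 0 < e) (hep : e < p)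
    (f g : α → ℝ≥0∞) (hf : Measurable f) (hg : Measurable g) :
    ∫⁻ z, f z ^ e * g z ^ (p - e) ∂ν ≤
      (∫⁻ z, f z ^ p ∂ν) ^ ((e : ℝ) / p) * (∫⁻ z, g z ^ p ∂ν) ^ (((p : ℝ) - e) / p) := by
  have he0 : (0:ℝ) < e := by exact_mod_cast he
  have hp0 : (0:ℝ) < p := by exact_mod_cast he.trans hep
  have hepR : (e:ℝ) < p := by exact_mod_cast hep
  have hpe : (0:ℝ) < (p:ℝ) - e := by linarith
  have hpq : ((p:ℝ)/e).HolderConjugate ((p:ℝ)/((p:ℝ) - e)) := by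
    rw [Real.holderConjugate_iff]
    constructor
    · rw [lt_div_iff₀ he0]; linarith
    · rw [inv_div, inv_div]; field_simp; ring
  have key := ENNReal.lintegral_mul_le_Lp_mul_Lq ν hpq
    ((hf.pow_const e).aemeasurable) ((hg.pow_const (p-e)).aemeasurable)
  have pow1 : ∀ x : ℝ≥0∞, (x ^ e) ^ ((p:ℝ)/e) = x ^ p := by
    intro x
    rw [← ENNReal.rpow_natCast x e, ← ENNReal.rpow_mul, ← ENNReal.rpow_natCast x p]
    congr 1; field_simp
  have pow2 : ∀ x : ℝ≥0∞, (x ^ (p - e)) ^ ((p:ℝ)/((p:ℝ)-e)) = x ^ p := by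
    intro x
    rw [← ENNReal.rpow_natCast x (p - e), ← ENNReal.rpow_mul, ← ENNReal.rpow_natCast x p]
    congr 1
    rw [Nat.cast_sub hep.le]; field_simp
  have e1 : (1:ℝ) / ((p:ℝ)/e) = (e:ℝ)/p := by field_simp
  have e2 : (1:ℝ) / ((p:ℝ)/((p:ℝ)-e)) = ((p:ℝ)-e)/p := by
    rw [one_div, inv_div]
  simp only [Pi.mul_apply, pow1, pow2, e1, e2] at key
  exact key

lemma setpow_bound (ν : Measure α) {p e : ℕ} (he : 0 < e) (hep : e < p)
    (u : α → ℝ≥0∞) (hu : Measurable u) (s : Set α) :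
    ∫⁻ z in s, u z ^ e ∂ν ≤
      (∫⁻ z, u z ^ p ∂ν) ^ ((e : ℝ) / p) * (ν s) ^ (((p : ℝ) - e) / p) := by
  have h := holder_aux (ν.restrict s) he hep u (fun _ => 1) hu measurable_const
  simp only [one_pow, mul_one] at h
  rw [lintegral_one, Measure.restrict_apply_univ] at h
  refine h.trans (mul_le_mul' (ENNReal.rpow_le_rpow
    (lintegral_mono' Measure.restrict_le_self le_rfl) (by positivity)) le_rfl)

variable {d : ℕ}

local notation "E" => EuclideanSpace ℝ (Fin d)

lemma pair_bound {p r : ℕ} (hr : 0 < r) (hrp : r < p)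
    (u v : E → ℝ≥0∞) (hu : Measurable u) (hv : Measurable v) (a : E) :
    (∫⁻ z : E, u z ^ r * v (z - a) ^ (p - r)) ≤
      (∫⁻ z : E, u z ^ p) ^ ((r : ℝ) / p) * (∫⁻ z : E, v z ^ p) ^ (((p : ℝ) - r) / p) := by
  have h := holder_aux volume hr hrp u (fun z => v (z - a)) hu
    (hv.comp (measurable_id.sub measurable_const))
  refine h.trans ?_
  rw [show (∫⁻ z : E, v (z - a) ^ p) = ∫⁻ z : E, v z ^ p from
    lintegral_sub_right_eq_self (fun z => v z ^ p) a]

lemma key_bound (R : ℝ) {C : ℝ≥0∞} (g₁ g₂ g₃ g₄ : E → ℝ≥0∞)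
    (h₁ : Measurable g₁) (h₂ : Measurable g₂) (h₃ : Measurable g₃) (h₄ : Measurable g₄)
    (hC : ∀ a : E, ∫⁻ z : E, g₂ z * g₄ (z - a) ≤ C) :
    (∫⁻ z₁ in closedBall (0:E) R, ∫⁻ z₂ in closedBall (0:E) R, ∫⁻ z₃ in closedBall (0:E) R,
        g₁ z₁ * g₂ z₂ * g₃ z₃ * g₄ (z₂ - z₁ - z₃))
      ≤ (∫⁻ z in closedBall (0:E) R, g₁ z) * (∫⁻ z in closedBall (0:E) R, g₃ z) * C := by
  set B := closedBall (0:E) R with hB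
  have hswap : ∀ z₁ : E,
      (∫⁻ z₂ in B, ∫⁻ z₃ in B, g₁ z₁ * g₂ z₂ * g₃ z₃ * g₄ (z₂ - z₁ - z₃))
        = ∫⁻ z₃ in B, ∫⁻ z₂ in B, g₁ z₁ * g₂ z₂ * g₃ z₃ * g₄ (z₂ - z₁ - z₃) := by
    intro z₁
    refine lintegral_lintegral_swap ?_
    exact (((measurable_const.mul (h₂.comp measurable_fst)).mul
      (h₃.comp measurable_snd)).mul
      (h₄.comp ((measurable_fst.sub measurable_const).sub measurable_snd))).aemeasurable
  calc (∫⁻ z₁ in B, ∫⁻ z₂ in B, ∫⁻ z₃ in B, g₁ z₁ * g₂ z₂ * g₃ z₃ * g₄ (z₂ - z₁ - z₃))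
      = ∫⁻ z₁ in B, ∫⁻ z₃ in B, ∫⁻ z₂ in B, g₁ z₁ * g₂ z₂ * g₃ z₃ * g₄ (z₂ - z₁ - z₃) :=
        lintegral_congr fun z₁ => hswap z₁
    _ ≤ ∫⁻ z₁ in B, ∫⁻ z₃ in B, g₁ z₁ * g₃ z₃ * C := by
        refine lintegral_mono fun z₁ => lintegral_mono fun z₃ => ?_
        calc (∫⁻ z₂ in B, g₁ z₁ * g₂ z₂ * g₃ z₃ * g₄ (z₂ - z₁ - z₃))
            = ∫⁻ z₂ in B, (g₁ z₁ * g₃ z₃) * (g₂ z₂ * g₄ (z₂ - (z₁ + z₃))) :=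
              lintegral_congr fun z₂ => by rw [sub_sub]; ring
          _ = (g₁ z₁ * g₃ z₃) * ∫⁻ z₂ in B, g₂ z₂ * g₄ (z₂ - (z₁ + z₃)) :=
              lintegral_const_mul _ (h₂.mul (h₄.comp (measurable_id.sub measurable_const)))
          _ ≤ (g₁ z₁ * g₃ z₃) * C := by
              gcongr
              exact (setLIntegral_le_lintegral _ _).trans (hC (z₁ + z₃))
    _ = (∫⁻ z in B, g₁ z) * (∫⁻ z in B, g₃ z) * C := by
        have step : ∀ z₁ : E, (∫⁻ z₃ in B, g₁ z₁ * g₃ z₃ * C)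
            = g₁ z₁ * ((∫⁻ z in B, g₃ z) * C) := by
          intro z₁
          rw [show (fun z₃ => g₁ z₁ * g₃ z₃ * C) = fun z₃ => g₁ z₁ * (g₃ z₃ * C) from
            funext fun z₃ => by ring]
          rw [lintegral_const_mul _ (h₃.mul_const _), lintegral_mul_const _ h₃]
        rw [lintegral_congr step, lintegral_mul_const _ h₁, mul_assoc]

lemma meas_iter2 {F : E → E → E → ℝ≥0∞}
    (hF : Measurable fun q : E × E × E => F q.1 q.2.1 q.2.2) (ν : Measure E) [SFinite ν] :
    Measurable fun z₁ => ∫⁻ z₂, ∫⁻ z₃, F z₁ z₂ z₃ ∂ν ∂ν := by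
  have h := (hF.lintegral_prod_right' (ν := ν.prod ν))
  have heq : (fun z₁ => ∫⁻ w, F z₁ w.1 w.2 ∂ν.prod ν)
      = fun z₁ => ∫⁻ z₂, ∫⁻ z₃, F z₁ z₂ z₃ ∂ν ∂ν := by
    funext z₁
    exact lintegral_prod _ ((hF.comp measurable_prodMk_left).aemeasurable)
  rwa [heq] at h

lemma iter3_add (ν : Measure E) [SFinite ν] (F G : E → E → E → ℝ≥0∞)
    (hF : Measurable fun q : E × E × E => F q.1 q.2.1 q.2.2)
    (hG : Measurable fun q : E × E × E => G q.1 q.2.1 q.2.2) :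
    (∫⁻ z₁, ∫⁻ z₂, ∫⁻ z₃, (F z₁ z₂ z₃ + G z₁ z₂ z₃) ∂ν ∂ν ∂ν)
      = (∫⁻ z₁, ∫⁻ z₂, ∫⁻ z₃, F z₁ z₂ z₃ ∂ν ∂ν ∂ν)
        + ∫⁻ z₁, ∫⁻ z₂, ∫⁻ z₃, G z₁ z₂ z₃ ∂ν ∂ν ∂ν := by
  have hF3 : ∀ z₁ z₂, Measurable (F z₁ z₂) := fun z₁ z₂ =>
    hF.comp (measurable_const.prodMk (measurable_const.prodMk measurable_id))
  have hF2 : ∀ z₁, Measurable fun z₂ => ∫⁻ z₃, F z₁ z₂ z₃ ∂ν := fun z₁ =>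
    Measurable.lintegral_prod_right' (hF.comp (measurable_prodMk_left (x := z₁)))
  have e3 : ∀ z₁, (∫⁻ z₂, ∫⁻ z₃, (F z₁ z₂ z₃ + G z₁ z₂ z₃) ∂ν ∂ν)
      = (∫⁻ z₂, ∫⁻ z₃, F z₁ z₂ z₃ ∂ν ∂ν) + ∫⁻ z₂, ∫⁻ z₃, G z₁ z₂ z₃ ∂ν ∂ν := by
    intro z₁
    rw [show (fun z₂ => ∫⁻ z₃, (F z₁ z₂ z₃ + G z₁ z₂ z₃) ∂ν)
        = fun z₂ => (∫⁻ z₃, F z₁ z₂ z₃ ∂ν) + ∫⁻ z₃, G z₁ z₂ z₃ ∂ν from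
      funext fun z₂ => lintegral_add_left (hF3 z₁ z₂) _]
    exact lintegral_add_left (hF2 z₁) _
  rw [lintegral_congr e3]
  exact lintegral_add_left (meas_iter2 hF ν) _

lemma measQ {p r : ℕ} (u₁ u₂ u₃ u₄ : E → ℝ≥0∞)
    (m₁ : Measurable u₁) (m₂ : Measurable u₂) (m₃ : Measurable u₃) (m₄ : Measurable u₄) :
    Measurable (fun q : E × E × E =>
      u₁ q.1 ^ r * u₂ q.2.1 ^ r * u₃ q.2.2 ^ (p - r) * u₄ (q.2.1 - q.1 - q.2.2) ^ (p - r)) := by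
  have h4 : Measurable fun q : E × E × E => q.2.1 - q.1 - q.2.2 :=
    ((measurable_fst.comp measurable_snd).sub measurable_fst).sub
      (measurable_snd.comp measurable_snd)
  exact ((((m₁.comp measurable_fst).pow_const r).mul
    ((m₂.comp (measurable_fst.comp measurable_snd)).pow_const r)).mul
    ((m₃.comp (measurable_snd.comp measurable_snd)).pow_const (p - r))).mul
    ((m₄.comp h4).pow_const (p - r))

lemma master {p r : ℕ} (hr0 : 0 < r) (hrp : r < p)
    (u₁ u₂ u₃ u₄ : E → ℝ≥0∞)
    (m₁ : Measurable u₁) (m₂ : Measurable u₂) (m₃ : Measurable u₃) (m₄ : Measurable u₄)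
    (R : ℝ) (hR : 1 ≤ R) :
    (∫⁻ z₁ in closedBall (0:E) R, ∫⁻ z₂ in closedBall (0:E) R, ∫⁻ z₃ in closedBall (0:E) R,
        u₁ z₁ ^ r * u₂ z₂ ^ r * u₃ z₃ ^ (p - r) * u₄ (z₂ - z₁ - z₃) ^ (p - r))
      ≤ volume (closedBall (0:E) R) *
        ((∫⁻ x : E, u₁ x ^ p) ^ ((r:ℝ)/p) * (∫⁻ x : E, u₂ x ^ p) ^ ((r:ℝ)/p) *
         (∫⁻ x : E, u₃ x ^ p) ^ (((p:ℝ)-r)/p) * (∫⁻ x : E, u₄ x ^ p) ^ (((p:ℝ)-r)/p)) := by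
  have hq0 : 0 < p - r := by omega
  have hqp : p - r < p := by omega
  have hp0R : (0:ℝ) < p := by exact_mod_cast hr0.trans hrp
  have hrpR : (r:ℝ) < p := by exact_mod_cast hrp
  set B := closedBall (0:E) R with hBdef
  have hV0 : volume B ≠ 0 := (measure_closedBall_pos _ _ (by linarith : (0:ℝ) < R)).ne'
  have hVtop : volume B ≠ ∞ := measure_closedBall_lt_top.ne
  have hkey := key_bound R (fun z => u₁ z ^ r) (fun z => u₂ z ^ r)
    (fun z => u₃ z ^ (p - r)) (fun z => u₄ z ^ (p - r))
    (m₁.pow_const r) (m₂.pow_const r) (m₃.pow_const (p - r)) (m₄.pow_const (p - r))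
    (fun a => pair_bound hr0 hrp u₂ u₄ m₂ m₄ a)
  refine hkey.trans ?_
  have A1 := setpow_bound volume hr0 hrp u₁ m₁ B
  have A3 := setpow_bound volume hq0 hqp u₃ m₃ B
  have hcast : ((p - r : ℕ) : ℝ) = (p:ℝ) - r := by
    rw [Nat.cast_sub hrp.le]
  rw [hcast, show (p:ℝ) - ((p:ℝ) - r) = (r:ℝ) by ring] at A3
  calc (∫⁻ z in B, u₁ z ^ r) * (∫⁻ z in B, u₃ z ^ (p - r)) *
          ((∫⁻ x : E, u₂ x ^ p) ^ ((r:ℝ)/p) * (∫⁻ x : E, u₄ x ^ p) ^ (((p:ℝ)-r)/p))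
      ≤ ((∫⁻ x : E, u₁ x ^ p) ^ ((r:ℝ)/p) * (volume B) ^ (((p:ℝ)-r)/p)) *
          ((∫⁻ x : E, u₃ x ^ p) ^ (((p:ℝ)-r)/p) * (volume B) ^ ((r:ℝ)/p)) *
          ((∫⁻ x : E, u₂ x ^ p) ^ ((r:ℝ)/p) * (∫⁻ x : E, u₄ x ^ p) ^ (((p:ℝ)-r)/p)) :=
        mul_le_mul' (mul_le_mul' A1 A3) le_rfl
    _ = ((volume B) ^ (((p:ℝ)-r)/p) * (volume B) ^ ((r:ℝ)/p)) *
          ((∫⁻ x : E, u₁ x ^ p) ^ ((r:ℝ)/p) * (∫⁻ x : E, u₂ x ^ p) ^ ((r:ℝ)/p) *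
           (∫⁻ x : E, u₃ x ^ p) ^ (((p:ℝ)-r)/p) * (∫⁻ x : E, u₄ x ^ p) ^ (((p:ℝ)-r)/p)) := by
        ring
    _ = volume B *
          ((∫⁻ x : E, u₁ x ^ p) ^ ((r:ℝ)/p) * (∫⁻ x : E, u₂ x ^ p) ^ ((r:ℝ)/p) *
           (∫⁻ x : E, u₃ x ^ p) ^ (((p:ℝ)-r)/p) * (∫⁻ x : E, u₄ x ^ p) ^ (((p:ℝ)-r)/p)) := by
        rw [← ENNReal.rpow_add _ _ hV0 hVtop,
          show ((p:ℝ)-r)/p + (r:ℝ)/p = 1 by field_simp; ring, ENNReal.rpow_one]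

noncomputable def psi (φ : E → ℝ) (n : ℕ) (x : E) : ℝ≥0∞ :=
  if ‖x‖ ≤ (n:ℝ) ∧ φ x ≤ n then ENNReal.ofReal (φ x) else 0

noncomputable def theta (φ : E → ℝ) (n : ℕ) (x : E) : ℝ≥0∞ :=
  if ‖x‖ ≤ (n:ℝ) ∧ φ x ≤ n then 0 else ENNReal.ofReal (φ x)

lemma cond_meas (φ : E → ℝ) (hm : Measurable φ) (n : ℕ) :
    MeasurableSet {x : E | ‖x‖ ≤ (n:ℝ) ∧ φ x ≤ n} := by
  rw [show {x : E | ‖x‖ ≤ (n:ℝ) ∧ φ x ≤ n}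
      = {x : E | ‖x‖ ≤ (n:ℝ)} ∩ {x : E | φ x ≤ n} from rfl]
  exact (measurableSet_le measurable_norm measurable_const).inter
    (measurableSet_le hm measurable_const)

lemma psi_meas (φ : E → ℝ) (hm : Measurable φ) (n : ℕ) : Measurable (psi φ n) :=
  Measurable.ite (cond_meas φ hm n) (ENNReal.measurable_ofReal.comp hm) measurable_const

lemma theta_meas (φ : E → ℝ) (hm : Measurable φ) (n : ℕ) : Measurable (theta φ n) :=
  Measurable.ite (cond_meas φ hm n) measurable_const (ENNReal.measurable_ofReal.comp hm)

lemma psi_pow_le (φ : E → ℝ) (n : ℕ) {e : ℕ} (he : 0 < e) (x : E) :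
    psi φ n x ^ e ≤ (n:ℝ≥0∞) ^ e *
      (closedBall (0:E) (n:ℝ)).indicator (fun _ => (1:ℝ≥0∞)) x := by
  unfold psi
  by_cases hx : ‖x‖ ≤ (n:ℝ) ∧ φ x ≤ n
  · rw [if_pos hx, Set.indicator_of_mem (mem_closedBall_zero_iff.2 hx.1), mul_one]
    have h : ENNReal.ofReal (φ x) ≤ (n:ℝ≥0∞) := by
      rw [← ENNReal.ofReal_natCast n]
      exact ENNReal.ofReal_le_ofReal hx.2
    exact pow_le_pow_left' h e
  · rw [if_neg hx, zero_pow he.ne']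
    exact zero_le

lemma psi_pow_le_const (φ : E → ℝ) (n : ℕ) (e : ℕ) (x : E) :
    psi φ n x ^ e ≤ (n:ℝ≥0∞) ^ e := by
  unfold psi
  by_cases hx : ‖x‖ ≤ (n:ℝ) ∧ φ x ≤ n
  · rw [if_pos hx]
    refine pow_le_pow_left' ?_ e
    rw [← ENNReal.ofReal_natCast n]
    exact ENNReal.ofReal_le_ofReal hx.2
  · rw [if_neg hx]
    exact pow_le_pow_left' zero_le e

lemma psi_term_bound (φ : E → ℝ) (hm : Measurable φ) (n : ℕ)
    {p r : ℕ} (hr0 : 0 < r) (hrp : r < p) (R : ℝ) :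
    (∫⁻ z₁ in closedBall (0:E) R, ∫⁻ z₂ in closedBall (0:E) R, ∫⁻ z₃ in closedBall (0:E) R,
        psi φ n z₁ ^ r * psi φ n z₂ ^ r * psi φ n z₃ ^ (p - r) *
          psi φ n (z₂ - z₁ - z₃) ^ (p - r))
      ≤ (n:ℝ≥0∞) ^ (2*p) * (volume (closedBall (0:E) (n:ℝ))) ^ (3:ℕ) := by
  have hq0 : 0 < p - r := by omega
  set Gn := (closedBall (0:E) (n:ℝ)).indicator (fun _ => (1:ℝ≥0∞)) with hGn
  have measG : Measurable Gn := measurable_const.indicator measurableSet_closedBall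
  have hGint : ∫⁻ z : E, Gn z = volume (closedBall (0:E) (n:ℝ)) :=
    lintegral_indicator_one measurableSet_closedBall
  set Vn := volume (closedBall (0:E) (n:ℝ)) with hVn
  have hC : ∀ a : E, (∫⁻ z : E, psi φ n z ^ r * psi φ n (z - a) ^ (p - r))
      ≤ (n:ℝ≥0∞) ^ p * Vn := by
    intro a
    calc (∫⁻ z : E, psi φ n z ^ r * psi φ n (z - a) ^ (p - r))
        ≤ ∫⁻ z : E, ((n:ℝ≥0∞) ^ r * Gn z) * (n:ℝ≥0∞) ^ (p - r) :=
          lintegral_mono fun z =>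
            mul_le_mul' (psi_pow_le φ n hr0 z) (psi_pow_le_const φ n (p - r) _)
      _ = ((n:ℝ≥0∞) ^ r * (n:ℝ≥0∞) ^ (p - r)) * ∫⁻ z : E, Gn z := by
          rw [show (fun z : E => ((n:ℝ≥0∞) ^ r * Gn z) * (n:ℝ≥0∞) ^ (p - r))
              = fun z : E => ((n:ℝ≥0∞) ^ r * (n:ℝ≥0∞) ^ (p - r)) * Gn z from
            funext fun z => by ring]
          exact lintegral_const_mul _ measG
      _ = (n:ℝ≥0∞) ^ p * Vn := by
          rw [← pow_add, show r + (p - r) = p from by omega, hGint]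
  have I1 : (∫⁻ z in closedBall (0:E) R, psi φ n z ^ r) ≤ (n:ℝ≥0∞) ^ r * Vn := by
    calc (∫⁻ z in closedBall (0:E) R, psi φ n z ^ r)
        ≤ ∫⁻ z in closedBall (0:E) R, (n:ℝ≥0∞) ^ r * Gn z :=
          lintegral_mono fun z => psi_pow_le φ n hr0 z
      _ = (n:ℝ≥0∞) ^ r * ∫⁻ z in closedBall (0:E) R, Gn z := lintegral_const_mul _ measG
      _ ≤ (n:ℝ≥0∞) ^ r * Vn := by
          gcongr
          exact (setLIntegral_le_lintegral _ _).trans hGint.le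
  have I3 : (∫⁻ z in closedBall (0:E) R, psi φ n z ^ (p - r)) ≤ (n:ℝ≥0∞) ^ (p - r) * Vn := by
    calc (∫⁻ z in closedBall (0:E) R, psi φ n z ^ (p - r))
        ≤ ∫⁻ z in closedBall (0:E) R, (n:ℝ≥0∞) ^ (p - r) * Gn z :=
          lintegral_mono fun z => psi_pow_le φ n hq0 z
      _ = (n:ℝ≥0∞) ^ (p - r) * ∫⁻ z in closedBall (0:E) R, Gn z := lintegral_const_mul _ measG
      _ ≤ (n:ℝ≥0∞) ^ (p - r) * Vn := by
          gcongr
          exact (setLIntegral_le_lintegral _ _).trans hGint.le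
  have hkey := key_bound R (fun z => psi φ n z ^ r) (fun z => psi φ n z ^ r)
    (fun z => psi φ n z ^ (p - r)) (fun z => psi φ n z ^ (p - r))
    ((psi_meas φ hm n).pow_const r) ((psi_meas φ hm n).pow_const r)
    ((psi_meas φ hm n).pow_const (p - r)) ((psi_meas φ hm n).pow_const (p - r)) hC
  refine hkey.trans ?_
  calc (∫⁻ z in closedBall (0:E) R, psi φ n z ^ r) *
        (∫⁻ z in closedBall (0:E) R, psi φ n z ^ (p - r)) * ((n:ℝ≥0∞) ^ p * Vn)
      ≤ ((n:ℝ≥0∞) ^ r * Vn) * ((n:ℝ≥0∞) ^ (p - r) * Vn) * ((n:ℝ≥0∞) ^ p * Vn) :=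
        mul_le_mul' (mul_le_mul' I1 I3) le_rfl
    _ = ((n:ℝ≥0∞) ^ r * (n:ℝ≥0∞) ^ (p - r) * (n:ℝ≥0∞) ^ p) * Vn ^ (3:ℕ) := by ring
    _ = (n:ℝ≥0∞) ^ (2*p) * Vn ^ (3:ℕ) := by
        rw [← pow_add, ← pow_add, show r + (p - r) + p = 2*p from by omega]

lemma theta_le (φ : E → ℝ) (n : ℕ) (x : E) : theta φ n x ≤ ENNReal.ofReal (φ x) := by
  unfold theta; split
  · exact zero_le
  · exact le_rfl

lemma real_nonneg (φ : E → ℝ) (hpos : ∀ x, 0 ≤ φ x) (p r : ℕ) (s : Set E) :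
    0 ≤ ∫ z₁ in s, ∫ z₂ in s, ∫ z₃ in s,
      φ z₁ ^ r * φ z₂ ^ r * φ z₃ ^ (p - r) * φ (z₂ - z₁ - z₃) ^ (p - r) :=
  integral_nonneg fun z₁ => integral_nonneg fun z₂ => integral_nonneg fun z₃ =>
    mul_nonneg (mul_nonneg (mul_nonneg (pow_nonneg (hpos _) _) (pow_nonneg (hpos _) _))
      (pow_nonneg (hpos _) _)) (pow_nonneg (hpos _) _)

lemma real_le_toReal (φ : E → ℝ) (hm : Measurable φ) (hpos : ∀ x, 0 ≤ φ x) (p r : ℕ)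
    (s : Set E)
    (hfin : (∫⁻ z₁ in s, ∫⁻ z₂ in s, ∫⁻ z₃ in s,
        ENNReal.ofReal (φ z₁) ^ r * ENNReal.ofReal (φ z₂) ^ r *
          ENNReal.ofReal (φ z₃) ^ (p - r) *
          ENNReal.ofReal (φ (z₂ - z₁ - z₃)) ^ (p - r)) ≠ ∞) :
    (∫ z₁ in s, ∫ z₂ in s, ∫ z₃ in s,
        φ z₁ ^ r * φ z₂ ^ r * φ z₃ ^ (p - r) * φ (z₂ - z₁ - z₃) ^ (p - r))
      ≤ (∫⁻ z₁ in s, ∫⁻ z₂ in s, ∫⁻ z₃ in s,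
        ENNReal.ofReal (φ z₁) ^ r * ENNReal.ofReal (φ z₂) ^ r *
          ENNReal.ofReal (φ z₃) ^ (p - r) *
          ENNReal.ofReal (φ (z₂ - z₁ - z₃)) ^ (p - r)).toReal := by
  have hf0 : ∀ z₁ z₂ z₃ : E,
      0 ≤ φ z₁ ^ r * φ z₂ ^ r * φ z₃ ^ (p - r) * φ (z₂ - z₁ - z₃) ^ (p - r) :=
    fun z₁ z₂ z₃ => mul_nonneg (mul_nonneg (mul_nonneg (pow_nonneg (hpos _) _)
      (pow_nonneg (hpos _) _)) (pow_nonneg (hpos _) _)) (pow_nonneg (hpos _) _)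
  have h4m : Measurable fun q : E × E × E => q.2.1 - q.1 - q.2.2 :=
    ((measurable_fst.comp measurable_snd).sub measurable_fst).sub
      (measurable_snd.comp measurable_snd)
  have hfm : Measurable (fun q : E × E × E =>
      φ q.1 ^ r * φ q.2.1 ^ r * φ q.2.2 ^ (p - r) * φ (q.2.1 - q.1 - q.2.2) ^ (p - r)) :=
    ((((hm.comp measurable_fst).pow_const r).mul
      ((hm.comp (measurable_fst.comp measurable_snd)).pow_const r)).mul
      ((hm.comp (measurable_snd.comp measurable_snd)).pow_const (p - r))).mul
      ((hm.comp h4m).pow_const (p - r))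
  have ofR : ∀ z₁ z₂ z₃ : E,
      ENNReal.ofReal (φ z₁ ^ r * φ z₂ ^ r * φ z₃ ^ (p - r) * φ (z₂ - z₁ - z₃) ^ (p - r))
        = ENNReal.ofReal (φ z₁) ^ r * ENNReal.ofReal (φ z₂) ^ r *
          ENNReal.ofReal (φ z₃) ^ (p - r) *
          ENNReal.ofReal (φ (z₂ - z₁ - z₃)) ^ (p - r) := by
    intro z₁ z₂ z₃
    have n1 : 0 ≤ φ z₁ ^ r := pow_nonneg (hpos _) _
    have n2 : 0 ≤ φ z₂ ^ r := pow_nonneg (hpos _) _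
    have n3 : 0 ≤ φ z₃ ^ (p - r) := pow_nonneg (hpos _) _
    rw [ENNReal.ofReal_mul (mul_nonneg (mul_nonneg n1 n2) n3),
      ENNReal.ofReal_mul (mul_nonneg n1 n2), ENNReal.ofReal_mul n1,
      ENNReal.ofReal_pow (hpos _), ENNReal.ofReal_pow (hpos _),
      ENNReal.ofReal_pow (hpos _), ENNReal.ofReal_pow (hpos _)]
  have h3 : ∀ z₁ z₂ : E,
      (∫ z₃ in s, φ z₁ ^ r * φ z₂ ^ r * φ z₃ ^ (p - r) * φ (z₂ - z₁ - z₃) ^ (p - r))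
        = (∫⁻ z₃ in s, ENNReal.ofReal (φ z₁) ^ r * ENNReal.ofReal (φ z₂) ^ r *
            ENNReal.ofReal (φ z₃) ^ (p - r) *
            ENNReal.ofReal (φ (z₂ - z₁ - z₃)) ^ (p - r)).toReal := by
    intro z₁ z₂
    rw [integral_eq_lintegral_of_nonneg_ae (Filter.Eventually.of_forall (hf0 z₁ z₂))
      ((hfm.comp (measurable_const.prodMk
        (measurable_const.prodMk measurable_id))).aestronglyMeasurable)]
    congr 1
    exact lintegral_congr fun z₃ => ofR z₁ z₂ z₃
  have sm2 : ∀ z₁ : E, AEStronglyMeasurable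
      (fun z₂ => ∫ z₃ in s,
        φ z₁ ^ r * φ z₂ ^ r * φ z₃ ^ (p - r) * φ (z₂ - z₁ - z₃) ^ (p - r))
      (volume.restrict s) := by
    intro z₁
    have hsm : StronglyMeasurable (fun q : E × E =>
        φ z₁ ^ r * φ q.1 ^ r * φ q.2 ^ (p - r) * φ (q.1 - z₁ - q.2) ^ (p - r)) :=
      (hfm.comp (measurable_prodMk_left (x := z₁))).stronglyMeasurable
    exact hsm.integral_prod_right'.aestronglyMeasurable
  have h2 : ∀ z₁ : E,
      ENNReal.ofReal (∫ z₂ in s, ∫ z₃ in s,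
        φ z₁ ^ r * φ z₂ ^ r * φ z₃ ^ (p - r) * φ (z₂ - z₁ - z₃) ^ (p - r))
        ≤ ∫⁻ z₂ in s, ∫⁻ z₃ in s,
            ENNReal.ofReal (φ z₁) ^ r * ENNReal.ofReal (φ z₂) ^ r *
            ENNReal.ofReal (φ z₃) ^ (p - r) *
            ENNReal.ofReal (φ (z₂ - z₁ - z₃)) ^ (p - r) := by
    intro z₁
    rw [integral_eq_lintegral_of_nonneg_ae
      (Filter.Eventually.of_forall fun z₂ => integral_nonneg (hf0 z₁ z₂)) (sm2 z₁)]
    refine le_trans ENNReal.ofReal_toReal_le (lintegral_mono fun z₂ => ?_)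
    rw [h3 z₁ z₂]
    exact ENNReal.ofReal_toReal_le
  have sm1 : AEStronglyMeasurable
      (fun z₁ => ∫ z₂ in s, ∫ z₃ in s,
        φ z₁ ^ r * φ z₂ ^ r * φ z₃ ^ (p - r) * φ (z₂ - z₁ - z₃) ^ (p - r))
      (volume.restrict s) := by
    have hg : StronglyMeasurable (fun q : (E × E) × E =>
        φ q.1.1 ^ r * φ q.1.2 ^ r * φ q.2 ^ (p - r) * φ (q.1.2 - q.1.1 - q.2) ^ (p - r)) :=
      (hfm.comp ((measurable_fst.fst).prodMk
        ((measurable_fst.snd).prodMk measurable_snd))).stronglyMeasurable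
    exact (hg.integral_prod_right'.integral_prod_right').aestronglyMeasurable
  rw [integral_eq_lintegral_of_nonneg_ae
    (Filter.Eventually.of_forall fun z₁ => integral_nonneg fun z₂ =>
      integral_nonneg (hf0 z₁ z₂)) sm1]
  exact ENNReal.toReal_mono hfin (lintegral_mono fun z₁ => h2 z₁)

end Stmt9Aux

open Stmt9Aux

/-- For an integer `p ≥ 2`, `r ∈ {1,…,p-1}` and a nonnegative `φ ∈ L^p(ℝ^d)`,
`R^{-d} ∫_{B_R³} φ(z₁)^r φ(z₂)^r φ(z₃)^{p-r} φ(z₂-z₁-z₃)^{p-r} dz → 0` as `R → ∞`. -/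
theorem stmt_9 (d p r : ℕ) (hd : 1 ≤ d) (hp : 2 ≤ p) (hr : 1 ≤ r) (hrp : r < p)
    (φ : EuclideanSpace ℝ (Fin d) → ℝ) (hmeas : Measurable φ)
    (hpos : ∀ x, 0 ≤ φ x) (hint : Integrable (fun x => φ x ^ p)) :
    Tendsto
      (fun R : ℝ => R ^ (-(d : ℝ)) *
        ∫ z₁ in closedBall (0 : EuclideanSpace ℝ (Fin d)) R,
          ∫ z₂ in closedBall (0 : EuclideanSpace ℝ (Fin d)) R,
            ∫ z₃ in closedBall (0 : EuclideanSpace ℝ (Fin d)) R,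
              φ z₁ ^ r * φ z₂ ^ r * φ z₃ ^ (p - r) * φ (z₂ - z₁ - z₃) ^ (p - r))
      atTop (𝓝 0) := by
  classical
  have hr0 : 0 < r := hr
  have hq0 : 0 < p - r := by omega
  have hp0R : (0:ℝ) < p := by exact_mod_cast (by omega : 0 < p)
  have hdpos : (0:ℝ) < d := by exact_mod_cast hd
  set a : ℝ := (r:ℝ)/p with ha_def
  set b : ℝ := ((p:ℝ)-r)/p with hb_def
  have ha0 : 0 ≤ a := by rw [ha_def]; positivity
  have haa : a ≠ 0 := by
    have : (0:ℝ) < a := div_pos (by exact_mod_cast hr0) hp0R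
    exact this.ne'
  have ha2 : a ≤ 2 := by
    rw [ha_def, div_le_iff₀ hp0R]
    have : (r:ℝ) ≤ p := by exact_mod_cast hrp.le
    nlinarith
  have hb0 : 0 ≤ b := by
    rw [hb_def]
    have : (r:ℝ) ≤ p := by exact_mod_cast hrp.le
    apply div_nonneg <;> linarith
  have hbb : b ≠ 0 := by
    have hrpR : (r:ℝ) < p := by exact_mod_cast hrp
    have : (0:ℝ) < b := div_pos (by linarith) hp0R
    exact this.ne'
  have hb2 : b ≤ 2 := by
    rw [hb_def, div_le_iff₀ hp0R]
    have : (0:ℝ) ≤ r := by positivity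
    nlinarith
  -- basic objects
  set Φ : (EuclideanSpace ℝ (Fin d)) → ℝ≥0∞ := fun x => ENNReal.ofReal (φ x) with hΦdef
  have hΦ : Measurable Φ := ENNReal.measurable_ofReal.comp hmeas
  set N : ℝ≥0∞ := ∫⁻ x : (EuclideanSpace ℝ (Fin d)), Φ x ^ p with hNdef
  have hNtop : N ≠ ∞ := by
    have h2 := hint.hasFiniteIntegral
    rw [hasFiniteIntegral_iff_ofReal
      (Filter.Eventually.of_forall fun x => pow_nonneg (hpos x) p)] at h2
    have heq : N = ∫⁻ x : (EuclideanSpace ℝ (Fin d)), ENNReal.ofReal (φ x ^ p) :=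
      lintegral_congr fun x => (ENNReal.ofReal_pow (hpos x) p).symm
    rw [heq]
    exact h2.ne
  set NΘ : ℕ → ℝ≥0∞ := fun n => ∫⁻ x : (EuclideanSpace ℝ (Fin d)), theta φ n x ^ p with hNΘdef
  have hNΘle : ∀ n, NΘ n ≤ N := fun n =>
    lintegral_mono fun x => pow_le_pow_left' (theta_le φ n x) p
  have hNΘtop : ∀ n, NΘ n ≠ ∞ := fun n => ((hNΘle n).trans_lt hNtop.lt_top).ne
  have hNΘ0 : Tendsto NΘ atTop (𝓝 0) := by
    have h := tendsto_lintegral_of_dominated_convergence (μ := (volume : Measure (EuclideanSpace ℝ (Fin d))))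
      (F := fun n x => theta φ n x ^ p) (f := fun _ => 0)
      (bound := fun x => Φ x ^ p)
      (fun n => (theta_meas φ hmeas n).pow_const p)
      (fun n => Filter.Eventually.of_forall fun x => pow_le_pow_left' (theta_le φ n x) p)
      hNtop
      (Filter.Eventually.of_forall fun x => ?_)
    · simpa using h
    · apply tendsto_atTop_of_eventually_const
        (i₀ := max (Nat.ceil ‖x‖) (Nat.ceil (φ x)))
      intro n hn
      have hx1 : ‖x‖ ≤ (n:ℝ) := by
        refine (Nat.le_ceil _).trans ?_
        exact_mod_cast (le_max_left _ _).trans hn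
      have hx2 : φ x ≤ (n:ℝ) := by
        refine (Nat.le_ceil _).trans ?_
        exact_mod_cast (le_max_right _ _).trans hn
      show theta φ n x ^ p = 0
      have hth : theta φ n x = 0 := by
        unfold Stmt9Aux.theta
        rw [if_pos ⟨hx1, hx2⟩]
      rw [hth, zero_pow (by omega : p ≠ 0)]
  -- the lintegral version
  set L : ℝ → ℝ≥0∞ := fun R =>
    ∫⁻ z₁ in closedBall (0:(EuclideanSpace ℝ (Fin d))) R, ∫⁻ z₂ in closedBall (0:(EuclideanSpace ℝ (Fin d))) R, ∫⁻ z₃ in closedBall (0:(EuclideanSpace ℝ (Fin d))) R,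
      Φ z₁ ^ r * Φ z₂ ^ r * Φ z₃ ^ (p - r) * Φ (z₂ - z₁ - z₃) ^ (p - r) with hLdef
  -- constants
  set M2 : ℝ≥0∞ := (max N 1) ^ (2:ℕ) with hM2def
  have hMtop : max N 1 ≠ ∞ := by
    rw [max_def]
    split <;> simp [hNtop]
  have hM2top : M2 ≠ ∞ := by
    rw [hM2def]
    exact ENNReal.pow_ne_top hMtop
  have hNpow : ∀ x : ℝ, 0 ≤ x → x ≤ 2 → N ^ x ≤ M2 := by
    intro x hx0 hx2
    calc N ^ x ≤ (max N 1) ^ x := ENNReal.rpow_le_rpow (le_max_left _ _) hx0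
      _ ≤ (max N 1) ^ (2:ℝ) :=
        ENNReal.rpow_le_rpow_of_exponent_le (le_max_right _ _) hx2
      _ = M2 := by
        rw [hM2def, ← ENNReal.rpow_natCast]
        norm_num
  have hNΘpow : ∀ n, ∀ x : ℝ, 0 ≤ x → NΘ n ^ x ≠ ∞ := fun n x hx =>
    ENNReal.rpow_ne_top_of_nonneg hx (hNΘtop n)
  set M6 : ℝ≥0∞ := M2 ^ (3:ℕ) with hM6def
  have hM6top : M6 ≠ ∞ := by rw [hM6def]; exact ENNReal.pow_ne_top hM2top
  set κ : ℕ → ℝ≥0∞ := fun n => NΘ n ^ a + NΘ n ^ b with hκdef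
  have hκtop : ∀ n, κ n ≠ ∞ := by
    intro n
    rw [hκdef]
    exact ENNReal.add_ne_top.2 ⟨hNΘpow n a ha0, hNΘpow n b hb0⟩
  -- the splitting bound
  have hLsplit : ∀ n : ℕ, ∀ R : ℝ, 1 ≤ R →
      L R ≤ (n:ℝ≥0∞) ^ (2*p) * (volume (closedBall (0:(EuclideanSpace ℝ (Fin d))) (n:ℝ))) ^ (3:ℕ)
        + 4 * (volume (closedBall (0:(EuclideanSpace ℝ (Fin d))) R) * (κ n * M6)) := by
    intro n R hR
    have hψ : Measurable (psi φ n) := psi_meas φ hmeas n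
    have hθ : Measurable (theta φ n) := theta_meas φ hmeas n
    have hcase : ∀ x : EuclideanSpace ℝ (Fin d), Φ x = psi φ n x ∨ Φ x = theta φ n x := by
      intro x
      by_cases hc : ‖x‖ ≤ (n:ℝ) ∧ φ x ≤ n
      · left; unfold Stmt9Aux.psi; rw [if_pos hc]
      · right; unfold Stmt9Aux.theta; rw [if_neg hc]
    have hpt : ∀ z₁ z₂ z₃ : EuclideanSpace ℝ (Fin d),
        Φ z₁ ^ r * Φ z₂ ^ r * Φ z₃ ^ (p-r) * Φ (z₂ - z₁ - z₃) ^ (p-r) ≤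
          psi φ n z₁ ^ r * psi φ n z₂ ^ r * psi φ n z₃ ^ (p-r) *
              psi φ n (z₂ - z₁ - z₃) ^ (p-r)
          + (theta φ n z₁ ^ r * Φ z₂ ^ r * Φ z₃ ^ (p-r) * Φ (z₂ - z₁ - z₃) ^ (p-r)
          + (Φ z₁ ^ r * theta φ n z₂ ^ r * Φ z₃ ^ (p-r) * Φ (z₂ - z₁ - z₃) ^ (p-r)
          + (Φ z₁ ^ r * Φ z₂ ^ r * theta φ n z₃ ^ (p-r) * Φ (z₂ - z₁ - z₃) ^ (p-r)
          + Φ z₁ ^ r * Φ z₂ ^ r * Φ z₃ ^ (p-r) * theta φ n (z₂ - z₁ - z₃) ^ (p-r)))) := by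
      intro z₁ z₂ z₃
      rcases hcase z₁ with h1 | h1
      · rcases hcase z₂ with h2 | h2
        · rcases hcase z₃ with h3 | h3
          · rcases hcase (z₂ - z₁ - z₃) with h4 | h4
            · rw [h1, h2, h3, h4]; exact self_le_add_right _ _
            · rw [h4]
              exact ((((self_le_add_left _ _).trans (self_le_add_left _ _)).trans
                (self_le_add_left _ _)).trans (self_le_add_left _ _))
          · rw [h3]
            exact (((self_le_add_right _ _).trans (self_le_add_left _ _)).trans
              (self_le_add_left _ _)).trans (self_le_add_left _ _)
        · rw [h2]
          exact ((self_le_add_right _ _).trans (self_le_add_left _ _)).trans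
            (self_le_add_left _ _)
      · rw [h1]
        exact (self_le_add_right _ _).trans (self_le_add_left _ _)
    have m0 := measQ (p := p) (r := r) (psi φ n) (psi φ n) (psi φ n) (psi φ n) hψ hψ hψ hψ
    have m1 := measQ (p := p) (r := r) (theta φ n) Φ Φ Φ hθ hΦ hΦ hΦ
    have m2 := measQ (p := p) (r := r) Φ (theta φ n) Φ Φ hΦ hθ hΦ hΦ
    have m3 := measQ (p := p) (r := r) Φ Φ (theta φ n) Φ hΦ hΦ hθ hΦ
    have m4 := measQ (p := p) (r := r) Φ Φ Φ (theta φ n) hΦ hΦ hΦ hθ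
    have B0 := psi_term_bound φ hmeas n hr0 hrp R
    have B1 := master hr0 hrp (theta φ n) Φ Φ Φ hθ hΦ hΦ hΦ R hR
    have B2 := master hr0 hrp Φ (theta φ n) Φ Φ hΦ hθ hΦ hΦ R hR
    have B3 := master hr0 hrp Φ Φ (theta φ n) Φ hΦ hΦ hθ hΦ R hR
    have B4 := master hr0 hrp Φ Φ Φ (theta φ n) hΦ hΦ hΦ hθ R hR
    rw [show (∫⁻ x : EuclideanSpace ℝ (Fin d), theta φ n x ^ p) = NΘ n from rfl,
      show (∫⁻ x : EuclideanSpace ℝ (Fin d), Φ x ^ p) = N from rfl,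
      ← ha_def, ← hb_def] at B1 B2 B3 B4
    have key_a : NΘ n ^ a ≤ κ n := self_le_add_right _ _
    have key_b : NΘ n ^ b ≤ κ n := self_le_add_left _ _
    have hZ1 : NΘ n ^ a * N ^ a * N ^ b * N ^ b ≤ κ n * M6 := by
      calc NΘ n ^ a * N ^ a * N ^ b * N ^ b ≤ κ n * M2 * M2 * M2 :=
            mul_le_mul' (mul_le_mul' (mul_le_mul' key_a (hNpow a ha0 ha2))
              (hNpow b hb0 hb2)) (hNpow b hb0 hb2)
        _ = κ n * M6 := by rw [hM6def]; ring
    have hZ2 : N ^ a * NΘ n ^ a * N ^ b * N ^ b ≤ κ n * M6 := by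
      calc N ^ a * NΘ n ^ a * N ^ b * N ^ b ≤ M2 * κ n * M2 * M2 :=
            mul_le_mul' (mul_le_mul' (mul_le_mul' (hNpow a ha0 ha2) key_a)
              (hNpow b hb0 hb2)) (hNpow b hb0 hb2)
        _ = κ n * M6 := by rw [hM6def]; ring
    have hZ3 : N ^ a * N ^ a * NΘ n ^ b * N ^ b ≤ κ n * M6 := by
      calc N ^ a * N ^ a * NΘ n ^ b * N ^ b ≤ M2 * M2 * κ n * M2 :=
            mul_le_mul' (mul_le_mul' (mul_le_mul' (hNpow a ha0 ha2) (hNpow a ha0 ha2))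
              key_b) (hNpow b hb0 hb2)
        _ = κ n * M6 := by rw [hM6def]; ring
    have hZ4 : N ^ a * N ^ a * N ^ b * NΘ n ^ b ≤ κ n * M6 := by
      calc N ^ a * N ^ a * N ^ b * NΘ n ^ b ≤ M2 * M2 * M2 * κ n :=
            mul_le_mul' (mul_le_mul' (mul_le_mul' (hNpow a ha0 ha2) (hNpow a ha0 ha2))
              (hNpow b hb0 hb2)) key_b
        _ = κ n * M6 := by rw [hM6def]; ring
    set V : ℝ≥0∞ := volume (closedBall (0:(EuclideanSpace ℝ (Fin d))) R) with hVdef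
    calc L R ≤ ∫⁻ z₁ in closedBall (0:(EuclideanSpace ℝ (Fin d))) R,
          ∫⁻ z₂ in closedBall (0:(EuclideanSpace ℝ (Fin d))) R,
          ∫⁻ z₃ in closedBall (0:(EuclideanSpace ℝ (Fin d))) R,
          (psi φ n z₁ ^ r * psi φ n z₂ ^ r * psi φ n z₃ ^ (p-r) *
              psi φ n (z₂ - z₁ - z₃) ^ (p-r)
          + (theta φ n z₁ ^ r * Φ z₂ ^ r * Φ z₃ ^ (p-r) * Φ (z₂ - z₁ - z₃) ^ (p-r)
          + (Φ z₁ ^ r * theta φ n z₂ ^ r * Φ z₃ ^ (p-r) * Φ (z₂ - z₁ - z₃) ^ (p-r)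
          + (Φ z₁ ^ r * Φ z₂ ^ r * theta φ n z₃ ^ (p-r) * Φ (z₂ - z₁ - z₃) ^ (p-r)
          + Φ z₁ ^ r * Φ z₂ ^ r * Φ z₃ ^ (p-r) * theta φ n (z₂ - z₁ - z₃) ^ (p-r))))) :=
          lintegral_mono fun z₁ => lintegral_mono fun z₂ => lintegral_mono fun z₃ =>
            hpt z₁ z₂ z₃
      _ = (∫⁻ z₁ in closedBall (0:(EuclideanSpace ℝ (Fin d))) R,
          ∫⁻ z₂ in closedBall (0:(EuclideanSpace ℝ (Fin d))) R,
          ∫⁻ z₃ in closedBall (0:(EuclideanSpace ℝ (Fin d))) R,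
            psi φ n z₁ ^ r * psi φ n z₂ ^ r * psi φ n z₃ ^ (p-r) *
              psi φ n (z₂ - z₁ - z₃) ^ (p-r))
          + ((∫⁻ z₁ in closedBall (0:(EuclideanSpace ℝ (Fin d))) R,
          ∫⁻ z₂ in closedBall (0:(EuclideanSpace ℝ (Fin d))) R,
          ∫⁻ z₃ in closedBall (0:(EuclideanSpace ℝ (Fin d))) R,
            theta φ n z₁ ^ r * Φ z₂ ^ r * Φ z₃ ^ (p-r) * Φ (z₂ - z₁ - z₃) ^ (p-r))
          + ((∫⁻ z₁ in closedBall (0:(EuclideanSpace ℝ (Fin d))) R,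
          ∫⁻ z₂ in closedBall (0:(EuclideanSpace ℝ (Fin d))) R,
          ∫⁻ z₃ in closedBall (0:(EuclideanSpace ℝ (Fin d))) R,
            Φ z₁ ^ r * theta φ n z₂ ^ r * Φ z₃ ^ (p-r) * Φ (z₂ - z₁ - z₃) ^ (p-r))
          + ((∫⁻ z₁ in closedBall (0:(EuclideanSpace ℝ (Fin d))) R,
          ∫⁻ z₂ in closedBall (0:(EuclideanSpace ℝ (Fin d))) R,
          ∫⁻ z₃ in closedBall (0:(EuclideanSpace ℝ (Fin d))) R,
            Φ z₁ ^ r * Φ z₂ ^ r * theta φ n z₃ ^ (p-r) * Φ (z₂ - z₁ - z₃) ^ (p-r))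
          + (∫⁻ z₁ in closedBall (0:(EuclideanSpace ℝ (Fin d))) R,
          ∫⁻ z₂ in closedBall (0:(EuclideanSpace ℝ (Fin d))) R,
          ∫⁻ z₃ in closedBall (0:(EuclideanSpace ℝ (Fin d))) R,
            Φ z₁ ^ r * Φ z₂ ^ r * Φ z₃ ^ (p-r) *
              theta φ n (z₂ - z₁ - z₃) ^ (p-r))))) := by
          rw [iter3_add _ _ _ m0 (m1.add (m2.add (m3.add m4))),
            iter3_add _ _ _ m1 (m2.add (m3.add m4)),
            iter3_add _ _ _ m2 (m3.add m4),
            iter3_add _ _ _ m3 m4]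
      _ ≤ (n:ℝ≥0∞) ^ (2*p) * (volume (closedBall (0:(EuclideanSpace ℝ (Fin d))) (n:ℝ))) ^ (3:ℕ)
          + (V * (κ n * M6) + (V * (κ n * M6) + (V * (κ n * M6) + V * (κ n * M6)))) :=
          add_le_add B0 (add_le_add (B1.trans (mul_le_mul' le_rfl hZ1))
            (add_le_add (B2.trans (mul_le_mul' le_rfl hZ2))
              (add_le_add (B3.trans (mul_le_mul' le_rfl hZ3))
                (B4.trans (mul_le_mul' le_rfl hZ4)))))
      _ = (n:ℝ≥0∞) ^ (2*p) * (volume (closedBall (0:(EuclideanSpace ℝ (Fin d))) (n:ℝ))) ^ (3:ℕ)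
          + 4 * (V * (κ n * M6)) := by ring
  -- volume of balls
  have hVball : ∀ R : ℝ, 0 ≤ R →
      (volume (closedBall (0:(EuclideanSpace ℝ (Fin d))) R)).toReal
        = R ^ d * (volume (ball (0:(EuclideanSpace ℝ (Fin d))) 1)).toReal := by
    intro R hR0
    rw [Measure.addHaar_closedBall _ _ hR0, finrank_euclideanSpace_fin,
      ENNReal.toReal_mul, ENNReal.toReal_ofReal (pow_nonneg hR0 d)]
  set v₁ : ℝ := (volume (ball (0:(EuclideanSpace ℝ (Fin d))) 1)).toReal with hv₁def
  have hv₁0 : 0 ≤ v₁ := ENNReal.toReal_nonneg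
  set m6 : ℝ := M6.toReal with hm6def
  have hm60 : 0 ≤ m6 := ENNReal.toReal_nonneg
  rw [NormedAddCommGroup.tendsto_nhds_zero]
  intro ε hε
  set c : ℝ := 8 * v₁ * m6 + 1 with hcdef
  have hc0 : 0 < c := by positivity
  set η : ℝ := ε / (2 * c) with hηdef
  have hη0 : 0 < η := by rw [hηdef]; positivity
  set δ₀ : ℝ≥0∞ := min ((ENNReal.ofReal η) ^ (a⁻¹)) ((ENNReal.ofReal η) ^ (b⁻¹)) with hδ₀def
  have hδ₀0 : 0 < δ₀ :=
    lt_min (ENNReal.rpow_pos (ENNReal.ofReal_pos.2 hη0) ENNReal.ofReal_ne_top)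
      (ENNReal.rpow_pos (ENNReal.ofReal_pos.2 hη0) ENNReal.ofReal_ne_top)
  obtain ⟨n, hn⟩ := (hNΘ0.eventually_lt_const hδ₀0).exists
  have hηa : NΘ n ^ a ≤ ENNReal.ofReal η := by
    calc NΘ n ^ a ≤ ((ENNReal.ofReal η) ^ (a⁻¹)) ^ a :=
          ENNReal.rpow_le_rpow (hn.le.trans (min_le_left _ _)) ha0
      _ = ENNReal.ofReal η := ENNReal.rpow_inv_rpow haa _
  have hηb : NΘ n ^ b ≤ ENNReal.ofReal η := by
    calc NΘ n ^ b ≤ ((ENNReal.ofReal η) ^ (b⁻¹)) ^ b :=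
          ENNReal.rpow_le_rpow (hn.le.trans (min_le_right _ _)) hb0
      _ = ENNReal.ofReal η := ENNReal.rpow_inv_rpow hbb _
  have hκn : κ n ≤ 2 * ENNReal.ofReal η := by
    calc κ n = NΘ n ^ a + NΘ n ^ b := rfl
      _ ≤ ENNReal.ofReal η + ENNReal.ofReal η := add_le_add hηa hηb
      _ = 2 * ENNReal.ofReal η := (two_mul _).symm
  have hsec : 4 * v₁ * (κ n * M6).toReal < ε/2 := by
    have h2top : (2 : ℝ≥0∞) * ENNReal.ofReal η ≠ ∞ :=
      ENNReal.mul_ne_top (by simp) ENNReal.ofReal_ne_top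
    have h2 : (κ n).toReal ≤ 2 * η := by
      have h := ENNReal.toReal_mono h2top hκn
      rwa [ENNReal.toReal_mul, ENNReal.toReal_ofReal hη0.le,
        (by norm_num : ((2:ℝ≥0∞)).toReal = (2:ℝ))] at h
    have h1 : (κ n * M6).toReal ≤ 2 * η * m6 := by
      rw [ENNReal.toReal_mul, ← hm6def]
      exact mul_le_mul_of_nonneg_right h2 hm60
    calc 4 * v₁ * (κ n * M6).toReal ≤ 4 * v₁ * (2 * η * m6) :=
          mul_le_mul_of_nonneg_left h1 (by positivity)
      _ = (c - 1) * η := by rw [hcdef]; ring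
      _ < c * η := by nlinarith [hη0]
      _ = ε/2 := by rw [hηdef]; field_simp
  set Cn : ℝ≥0∞ := (n:ℝ≥0∞) ^ (2*p) *
    (volume (closedBall (0:(EuclideanSpace ℝ (Fin d))) (n:ℝ))) ^ (3:ℕ) with hCndef
  have hCntop : Cn ≠ ∞ := by
    rw [hCndef]
    exact ENNReal.mul_ne_top (ENNReal.pow_ne_top (ENNReal.natCast_ne_top n))
      (ENNReal.pow_ne_top measure_closedBall_lt_top.ne)
  have hfst : ∀ᶠ R in atTop, R ^ (-(d:ℝ)) * Cn.toReal < ε/2 := by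
    have h := (tendsto_rpow_neg_atTop hdpos).mul_const Cn.toReal
    rw [zero_mul] at h
    exact h.eventually_lt_const (half_pos hε)
  filter_upwards [hfst, eventually_ge_atTop (1:ℝ)] with R hR1 hRge
  have hR0 : (0:ℝ) < R := lt_of_lt_of_le one_pos hRge
  have hρ0 : 0 ≤ R ^ (-(d:ℝ)) := Real.rpow_nonneg hR0.le _
  set V : ℝ≥0∞ := volume (closedBall (0:(EuclideanSpace ℝ (Fin d))) R) with hVdef
  have hVtop : V ≠ ∞ := measure_closedBall_lt_top.ne
  have hRHS : Cn + 4 * (V * (κ n * M6)) ≠ ∞ :=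
    ENNReal.add_ne_top.2 ⟨hCntop, ENNReal.mul_ne_top (by simp)
      (ENNReal.mul_ne_top hVtop (ENNReal.mul_ne_top (hκtop n) hM6top))⟩
  have hLR := hLsplit n R hRge
  have hLfin : L R ≠ ∞ := (hLR.trans_lt hRHS.lt_top).ne
  have hIle := real_le_toReal φ hmeas hpos p r
    (closedBall (0:(EuclideanSpace ℝ (Fin d))) R) hLfin
  have hInn := real_nonneg φ hpos p r (closedBall (0:(EuclideanSpace ℝ (Fin d))) R)
  rw [Real.norm_eq_abs, abs_of_nonneg (mul_nonneg hρ0 hInn)]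
  refine lt_of_le_of_lt (mul_le_mul_of_nonneg_left hIle hρ0) ?_
  refine lt_of_le_of_lt (mul_le_mul_of_nonneg_left
    ((ENNReal.toReal_mono hRHS hLR).trans ENNReal.toReal_add_le) hρ0) ?_
  have hVR : V.toReal = R ^ d * v₁ := by rw [hVdef]; exact hVball R hR0.le
  have hRhd : R ^ (-(d:ℝ)) * R ^ (d:ℕ) = 1 := by
    rw [← Real.rpow_natCast R d, ← Real.rpow_add hR0]
    norm_num
  have heval : R ^ (-(d:ℝ)) * (Cn.toReal + (4 * (V * (κ n * M6))).toReal)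
      = R ^ (-(d:ℝ)) * Cn.toReal + 4 * v₁ * (κ n * M6).toReal := by
    rw [mul_add]
    congr 1
    rw [ENNReal.toReal_mul, ENNReal.toReal_mul, ENNReal.toReal_ofNat, hVR]
    calc R ^ (-(d:ℝ)) * (4 * (R ^ d * v₁ * (κ n * M6).toReal))
        = (R ^ (-(d:ℝ)) * R ^ (d:ℕ)) * (4 * v₁ * (κ n * M6).toReal) := by ring
      _ = 4 * v₁ * (κ n * M6).toReal := by rw [hRhd, one_mul]
  rw [heval]
  have hfin2 := add_lt_add hR1 hsec
  rw [add_halves] at hfin2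
  exact hfin2
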